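/- Let G1 be an r1-regular graph on n1 vertices and G2 any graph on n2 vertices. Set L1 = L(G1) + n2·I_{n1}, L2 = -1_{n2}^T ⊗ I_{n1}, L3 = (L(G2) + I_{n2}) ⊗ I_{n1}, and S = L3 - J_{n2×n2} ⊗ L1^{-1}. Then the block matrix [[L1^{-1} + L1^{-1} L2 S^# L2^T L1^{-1}, -L1^{-1} L2 S^#],[-S^# L2^T L1^{-1}, S^#]] is a symmetric {1}-inverse of the Laplacian of the corona G1∘G2. -/

import Mathlib

open Matrix Kronecker

def corona {V1 V2 : Type*} (G1 : SimpleGraph V1) (G2 : SimpleGraph V2) :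
    SimpleGraph (V1 ⊕ V2 × V1) where
  Adj x y :=
    match x, y with
    | .inl i, .inl j => G1.Adj i j
    | .inl i, .inr (_, k) => i = k
    | .inr (_, k), .inl i => k = i
    | .inr (w, i), .inr (w', j) => i = j ∧ G2.Adj w w'
  symm := ⟨by
    rintro (i | ⟨w, i⟩) (j | ⟨w', j⟩) h
    · exact h.symm
    · exact h.symm
    · exact h.symm
    · exact ⟨h.1.symm, h.2.symm⟩⟩
  loopless := ⟨by
    rintro (i | ⟨w, i⟩) h
    · exact G1.irrefl h
    · exact G2.irrefl h.2⟩

noncomputable instance {V1 V2 : Type*} (G1 : SimpleGraph V1) (G2 : SimpleGraph V2) :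
    DecidableRel (corona G1 G2).Adj := Classical.decRel _

lemma corona_adj_ll {V1 V2 : Type*} {G1 : SimpleGraph V1} {G2 : SimpleGraph V2} (i j : V1) :
    (corona G1 G2).Adj (Sum.inl i) (Sum.inl j) ↔ G1.Adj i j := Iff.rfl
lemma corona_adj_lr {V1 V2 : Type*} {G1 : SimpleGraph V1} {G2 : SimpleGraph V2} (i : V1)
    (p : V2 × V1) : (corona G1 G2).Adj (Sum.inl i) (Sum.inr p) ↔ i = p.2 := Iff.rfl
lemma corona_adj_rl {V1 V2 : Type*} {G1 : SimpleGraph V1} {G2 : SimpleGraph V2} (p : V2 × V1)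
    (i : V1) : (corona G1 G2).Adj (Sum.inr p) (Sum.inl i) ↔ p.2 = i := Iff.rfl
lemma corona_adj_rr {V1 V2 : Type*} {G1 : SimpleGraph V1} {G2 : SimpleGraph V2} (p q : V2 × V1) :
    (corona G1 G2).Adj (Sum.inr p) (Sum.inr q) ↔ p.2 = q.2 ∧ G2.Adj p.1 q.1 := Iff.rfl

lemma corona_degree_inl {n1 n2 : ℕ} (G1 : SimpleGraph (Fin n1)) (G2 : SimpleGraph (Fin n2))
    [DecidableRel G1.Adj] [DecidableRel G2.Adj] (i : Fin n1) :
    (corona G1 G2).degree (Sum.inl i) = G1.degree i + n2 := by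
  rw [SimpleGraph.degree, SimpleGraph.neighborFinset_eq_filter, Finset.card_filter,
    Fintype.sum_sum_type, SimpleGraph.degree, SimpleGraph.neighborFinset_eq_filter,
    Finset.card_filter]
  congr 1
  · exact Finset.sum_congr rfl fun j _ => if_congr (corona_adj_ll i j) rfl rfl
  · rw [Fintype.sum_prod_type]
    have : ∀ w : Fin n2,
        (∑ k : Fin n1, if (corona G1 G2).Adj (Sum.inl i) (Sum.inr (w, k)) then 1 else 0) = 1 := by
      intro w
      rw [Finset.sum_congr rfl fun k _ => if_congr (corona_adj_lr i (w, k)) rfl rfl]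
      simp
    simp [this]

lemma corona_degree_inr {n1 n2 : ℕ} (G1 : SimpleGraph (Fin n1)) (G2 : SimpleGraph (Fin n2))
    [DecidableRel G1.Adj] [DecidableRel G2.Adj] (w : Fin n2) (i : Fin n1) :
    (corona G1 G2).degree (Sum.inr (w, i)) = G2.degree w + 1 := by
  rw [SimpleGraph.degree, SimpleGraph.neighborFinset_eq_filter, Finset.card_filter,
    Fintype.sum_sum_type, SimpleGraph.degree, SimpleGraph.neighborFinset_eq_filter,
    Finset.card_filter]
  rw [add_comm (∑ _a ∈ _, _)]
  congr 1
  · rw [Fintype.sum_prod_type]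
    have : ∀ w' : Fin n2,
        (∑ k : Fin n1, if (corona G1 G2).Adj (Sum.inr (w, i)) (Sum.inr (w', k)) then 1 else 0) =
          if G2.Adj w w' then 1 else 0 := by
      intro w'
      rw [Finset.sum_congr rfl fun k _ => if_congr (corona_adj_rr (w, i) (w', k)) rfl rfl]
      by_cases h : G2.Adj w w' <;> simp [h]
    rw [Finset.sum_congr rfl fun w' _ => this w']
  · rw [Finset.sum_congr rfl fun j _ => if_congr (corona_adj_rl (w, i) j) rfl rfl]
    simp

/-- The displayed block matrix built from `L1 = L(G1) + n2 I`, `L2 = -1ᵀ ⊗ I`,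
`L3 = (L(G2) + I) ⊗ I`, `S = L3 - J ⊗ L1⁻¹` and the group inverse `Sh` of `S`
is a symmetric `{1}`-inverse of the Laplacian of the corona `G1 ∘ G2`. -/
theorem corona_lap_symmetric_one_inverse {n1 n2 r1 : ℕ}
    (G1 : SimpleGraph (Fin n1)) (G2 : SimpleGraph (Fin n2))
    [DecidableRel G1.Adj] [DecidableRel G2.Adj]
    (hreg : G1.IsRegularOfDegree r1)
    (L1 : Matrix (Fin n1) (Fin n1) ℝ)
    (hL1 : L1 = G1.lapMatrix ℝ + (n2 : ℝ) • (1 : Matrix (Fin n1) (Fin n1) ℝ))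
    (hL1inv : IsUnit L1.det)
    (L2 : Matrix (Fin n1) (Fin n2 × Fin n1) ℝ)
    (hL2 : L2 = Matrix.of fun i p => -(1 : Matrix (Fin n1) (Fin n1) ℝ) i p.2)
    (L3 : Matrix (Fin n2 × Fin n1) (Fin n2 × Fin n1) ℝ)
    (hL3 : L3 = (G2.lapMatrix ℝ + 1) ⊗ₖ (1 : Matrix (Fin n1) (Fin n1) ℝ))
    (S Sh : Matrix (Fin n2 × Fin n1) (Fin n2 × Fin n1) ℝ)
    (hS : S = L3 - (Matrix.of fun _ _ => (1 : ℝ) : Matrix (Fin n2) (Fin n2) ℝ) ⊗ₖ L1⁻¹)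
    (hSh : S * Sh * S = S ∧ Sh * S * Sh = Sh ∧ S * Sh = Sh * S)
    (X : Matrix (Fin n1 ⊕ Fin n2 × Fin n1) (Fin n1 ⊕ Fin n2 × Fin n1) ℝ)
    (hX : X = Matrix.fromBlocks
      (L1⁻¹ + L1⁻¹ * L2 * Sh * L2ᵀ * L1⁻¹) (-(L1⁻¹ * L2 * Sh))
      (-(Sh * L2ᵀ * L1⁻¹)) Sh) :
    Xᵀ = X ∧
    (corona G1 G2).lapMatrix ℝ * X * (corona G1 G2).lapMatrix ℝ =
      (corona G1 G2).lapMatrix ℝ := by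
  obtain ⟨h1, h2, h3⟩ := hSh
  have hK1 : L1 * L1⁻¹ = 1 := Matrix.mul_nonsing_inv _ hL1inv
  have hK2 : L1⁻¹ * L1 = 1 := Matrix.nonsing_inv_mul _ hL1inv
  -- symmetry facts
  have hL1T : L1ᵀ = L1 := by
    rw [hL1, Matrix.transpose_add, Matrix.transpose_smul, Matrix.transpose_one,
      (G1.isSymm_lapMatrix (R := ℝ)).eq]
  have hKT : (L1⁻¹)ᵀ = L1⁻¹ := by rw [Matrix.transpose_nonsing_inv, hL1T]
  have hJT : (Matrix.of fun _ _ => (1 : ℝ) : Matrix (Fin n2) (Fin n2) ℝ)ᵀ =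
      Matrix.of fun _ _ => (1 : ℝ) := rfl
  have hST : Sᵀ = S := by
    simp only [hS, hL3, Matrix.transpose_sub, ← Matrix.kroneckerMap_transpose,
      Matrix.transpose_add, Matrix.transpose_one, hKT, (G2.isSymm_lapMatrix (R := ℝ)).eq, hJT]
  -- transposed group-inverse identities
  have y1 : S * Shᵀ * S = S := by
    have := congrArg Matrix.transpose h1
    simpa [Matrix.transpose_mul, hST, Matrix.mul_assoc] using this
  have y2 : Shᵀ * S * Shᵀ = Shᵀ := by
    have := congrArg Matrix.transpose h2
    simpa [Matrix.transpose_mul, hST, Matrix.mul_assoc] using this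
  have y3 : S * Shᵀ = Shᵀ * S := by
    have := congrArg Matrix.transpose h3
    simpa [Matrix.transpose_mul, hST] using this.symm
  -- Sh is symmetric (uniqueness of the group inverse)
  have e1 : Sh = Sh * Sh * S := by
    conv_lhs => rw [← h2]
    rw [Matrix.mul_assoc, h3, ← Matrix.mul_assoc]
  have e2 : Shᵀ = S * Shᵀ * Shᵀ := by
    conv_lhs => rw [← y2]
    rw [← y3]
  have a : Sh = Sh * Shᵀ * S := by
    calc Sh = Sh * Sh * S := e1
      _ = Sh * Sh * (S * Shᵀ * S) := by rw [y1]
      _ = Sh * Sh * S * (Shᵀ * S) := by simp only [Matrix.mul_assoc]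
      _ = Sh * (Shᵀ * S) := by rw [← e1]
      _ = Sh * Shᵀ * S := by rw [Matrix.mul_assoc]
  have b : Shᵀ = Sh * S * Shᵀ := by
    calc Shᵀ = S * Shᵀ * Shᵀ := e2
      _ = S * Sh * S * Shᵀ * Shᵀ := by rw [h1]
      _ = S * Sh * (S * Shᵀ * Shᵀ) := by simp only [Matrix.mul_assoc]
      _ = S * Sh * Shᵀ := by rw [← e2]
      _ = Sh * S * Shᵀ := by rw [h3]
  have hShT : Shᵀ = Sh := by
    calc Shᵀ = Sh * S * Shᵀ := b
      _ = Sh * (S * Shᵀ) := by rw [Matrix.mul_assoc]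
      _ = Sh * (Shᵀ * S) := by rw [y3]
      _ = Sh * Shᵀ * S := by rw [← Matrix.mul_assoc]
      _ = Sh := a.symm
  -- the Schur complement identity  L2ᵀ L1⁻¹ L2 = J ⊗ L1⁻¹
  have hJ : L2ᵀ * L1⁻¹ * L2 =
      (Matrix.of fun _ _ => (1 : ℝ) : Matrix (Fin n2) (Fin n2) ℝ) ⊗ₖ L1⁻¹ := by
    ext ⟨w, i⟩ ⟨w', j⟩
    simp [Matrix.mul_apply, hL2, Matrix.one_apply, Matrix.kroneckerMap_apply,
      Finset.sum_ite_eq, Finset.sum_ite_eq', ite_mul, mul_ite, eq_comm]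
  have hJ' : L2ᵀ * L1⁻¹ * L2 = L3 - S := by rw [hJ, hS]; abel
  -- the Laplacian of the corona in block form
  have hLc : (corona G1 G2).lapMatrix ℝ = Matrix.fromBlocks L1 L2 L2ᵀ L3 := by
    ext a b
    rcases a with i | ⟨w, i⟩ <;> rcases b with j | ⟨w', j⟩
    · rw [show ((corona G1 G2).lapMatrix ℝ) (Sum.inl i) (Sum.inl j) =
        (if (Sum.inl i : Fin n1 ⊕ Fin n2 × Fin n1) = Sum.inl j
            then ((corona G1 G2).degree (Sum.inl i) : ℝ) else 0) -
          (if (corona G1 G2).Adj (Sum.inl i) (Sum.inl j) then 1 else 0) from by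
          simp [SimpleGraph.lapMatrix, SimpleGraph.degMatrix, Matrix.diagonal_apply]]
      rw [if_congr (corona_adj_ll i j) rfl rfl, corona_degree_inl]
      simp only [Matrix.fromBlocks_apply₁₁, hL1, Matrix.add_apply, Matrix.smul_apply,
        Matrix.one_apply, SimpleGraph.lapMatrix, SimpleGraph.degMatrix, Matrix.sub_apply,
        Matrix.diagonal_apply, SimpleGraph.adjMatrix_apply, Sum.inl.injEq, smul_eq_mul]
      split_ifs <;> push_cast <;> ring
    · rw [show ((corona G1 G2).lapMatrix ℝ) (Sum.inl i) (Sum.inr (w', j)) =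
        (0 : ℝ) - (if (corona G1 G2).Adj (Sum.inl i) (Sum.inr (w', j)) then 1 else 0) from by
          simp [SimpleGraph.lapMatrix, SimpleGraph.degMatrix, Matrix.diagonal_apply]]
      rw [if_congr (corona_adj_lr i (w', j)) rfl rfl]
      simp [hL2, Matrix.one_apply]
    · rw [show ((corona G1 G2).lapMatrix ℝ) (Sum.inr (w, i)) (Sum.inl j) =
        (0 : ℝ) - (if (corona G1 G2).Adj (Sum.inr (w, i)) (Sum.inl j) then 1 else 0) from by
          simp [SimpleGraph.lapMatrix, SimpleGraph.degMatrix, Matrix.diagonal_apply]]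
      rw [if_congr (corona_adj_rl (w, i) j) rfl rfl]
      simp [hL2, Matrix.one_apply, eq_comm]
    · rw [show ((corona G1 G2).lapMatrix ℝ) (Sum.inr (w, i)) (Sum.inr (w', j)) =
        (if (Sum.inr (w, i) : Fin n1 ⊕ Fin n2 × Fin n1) = Sum.inr (w', j)
            then ((corona G1 G2).degree (Sum.inr (w, i)) : ℝ) else 0) -
          (if (corona G1 G2).Adj (Sum.inr (w, i)) (Sum.inr (w', j)) then 1 else 0) from by
          simp [SimpleGraph.lapMatrix, SimpleGraph.degMatrix, Matrix.diagonal_apply]]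
      rw [if_congr (corona_adj_rr (w, i) (w', j)) rfl rfl, corona_degree_inr]
      simp only [Matrix.fromBlocks_apply₂₂, hL3, Matrix.kroneckerMap_apply, Sum.inr.injEq,
        Prod.mk.injEq, Matrix.add_apply, Matrix.one_apply, SimpleGraph.lapMatrix,
        SimpleGraph.degMatrix, Matrix.sub_apply, Matrix.diagonal_apply,
        SimpleGraph.adjMatrix_apply]
      by_cases hww : w = w' <;> by_cases hij : i = j <;>
        by_cases hadj : G2.Adj w w' <;>
        simp [hww, hij, hadj] <;> push_cast <;> first
          | ring
          | (subst hww; exact absurd hadj (G2.loopless w))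
  -- cancellation helpers
  have hc1 : ∀ {m : Type} (M : Matrix (Fin n1) m ℝ), L1 * (L1⁻¹ * M) = M := fun M => by
    rw [← Matrix.mul_assoc, hK1, Matrix.one_mul]
  have hW : ∀ {m : Type} (M : Matrix (Fin n2 × Fin n1) m ℝ),
      L2ᵀ * (L1⁻¹ * (L2 * M)) = (L3 - S) * M := fun M => by
    rw [← Matrix.mul_assoc, ← Matrix.mul_assoc, hJ']
  have hW0 : L2ᵀ * (L1⁻¹ * L2) = L3 - S := by rw [← Matrix.mul_assoc, hJ']
  constructor
  · rw [hX, Matrix.fromBlocks_transpose]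
    simp only [Matrix.transpose_add, Matrix.transpose_neg, Matrix.transpose_mul,
      Matrix.transpose_transpose, hKT, hShT, Matrix.mul_assoc]
  · rw [hLc, hX]
    have hLX : Matrix.fromBlocks L1 L2 L2ᵀ L3 * Matrix.fromBlocks
        (L1⁻¹ + L1⁻¹ * L2 * Sh * L2ᵀ * L1⁻¹) (-(L1⁻¹ * L2 * Sh))
        (-(Sh * L2ᵀ * L1⁻¹)) Sh =
        Matrix.fromBlocks 1 0 (L2ᵀ * L1⁻¹ - S * (Sh * (L2ᵀ * L1⁻¹))) (S * Sh) := by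
      rw [Matrix.fromBlocks_multiply, Matrix.fromBlocks_inj]
      refine ⟨?_, ?_, ?_, ?_⟩
      · simp only [Matrix.mul_add, Matrix.mul_neg, Matrix.mul_assoc, hc1, hK1]
        abel
      · simp only [Matrix.mul_neg, Matrix.mul_assoc, hc1]
        abel
      · simp only [Matrix.mul_add, Matrix.mul_neg, Matrix.mul_assoc, hW, hW0,
          Matrix.sub_mul]
        abel
      · simp only [Matrix.mul_neg, Matrix.mul_assoc, hW, Matrix.sub_mul]
        abel
    rw [hLX, Matrix.fromBlocks_multiply, Matrix.fromBlocks_inj]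
    have h1' : S * (Sh * S) = S := by rw [← Matrix.mul_assoc]; exact h1
    refine ⟨by simp, by simp, ?_, ?_⟩
    · simp only [Matrix.sub_mul, Matrix.mul_assoc, hK2, Matrix.mul_one]
      abel
    · simp only [Matrix.sub_mul, Matrix.mul_assoc, hW0, Matrix.mul_sub, h1']
      abel
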